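/- In the four-state game on n >= 3 players, every scheduler f satisfying f(s, 1) = s_1 ⊕ 2, f(s, i) = s_i ⊕ 1 for 1 < i < n, and f(s, n) = s_n ⊕ 2 ensures self-stabilization: in every improvement path generated by f, every player is selected infinitely often and, from a certain point on, every joint strategy in it is legitimate. -/

import Mathlib

/-- `s i` is a best response of player `i` relative to the allowed strategy sets
`A` (player `i` may only use strategies `c` with `A i c`). -/
def BestResponseOn {n : ℕ} {C : Type*}
    (p : (Fin n → C) → Fin n → ℕ) (A : Fin n → C → Prop)
    (s : Fin n → C) (i : Fin n) : Prop :=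
  ∀ c : C, A i c → p (Function.update s i c) i ≤ p s i

/-- A joint strategy is legitimate (relative to the allowed strategy sets `A`)
if exactly one player does not play a best response. -/
def LegitimateOn {n : ℕ} {C : Type*}
    (p : (Fin n → C) → Fin n → ℕ) (A : Fin n → C → Prop)
    (s : Fin n → C) : Prop :=
  ∃! i : Fin n, ¬ BestResponseOn p A s i

/-- Allowed strategies in the four-state game on `n` players (indexed `0, …, n-1`):
the bottom machine (player `0`) may use only `{1, 3}`, the top machine (player `n-1`)
only `{0, 2}`, and every normal machine all of `ZMod 4 = {0, 1, 2, 3}`. -/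
def fourValid (n : ℕ) [NeZero n] (i : Fin n) (c : ZMod 4) : Prop :=
  if i = 0 then c = 1 ∨ c = 3
  else if i.val = n - 1 then c = 0 ∨ c = 2
  else True

/-- Payoff in the four-state game on `n` players with strategies in `ZMod 4`
(`+` being addition modulo `4`):
`p 0 s = 0` if `s 0 + 1 = s 1` and `1` otherwise;
for `0 < i < n-1`, `p i s = 0` if both `s i + 1` and `s i + 2` belong to
`{s (i-1), s (i+1)}`, `p i s = 1` if `s i + 1 ∈ {s (i-1), s (i+1)}` but
`s i + 2 ∉ {s (i-1), s (i+1)}`, and `p i s = 2` otherwise;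
`p (n-1) s = 0` if `s (n-1) + 1 = s (n-2)` and `1` otherwise. -/
def fourPayoff (n : ℕ) [NeZero n] (s : Fin n → ZMod 4) (i : Fin n) : ℕ :=
  if i = 0 then (if s 0 + 1 = s 1 then 0 else 1)
  else if i.val = n - 1 then (if s i + 1 = s (i - 1) then 0 else 1)
  else
    if (s i + 1 = s (i - 1) ∨ s i + 1 = s (i + 1)) ∧
       (s i + 2 = s (i - 1) ∨ s i + 2 = s (i + 1)) then 0
    else if s i + 1 = s (i - 1) ∨ s i + 1 = s (i + 1) then 1
    else 2


def fsW1 (v : ZMod 4) : ℕ := if v = 1 ∨ v = 3 then 1 else 0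
def fsW2 (v : ZMod 4) : ℕ := if v = 2 then 1 else 0
def fsS (m : ℕ) (x : ℕ → ZMod 4) : Finset ℕ :=
  (Finset.range (m+1)).filter (fun j => x j = 1 ∨ x j = 3)
def fsT (m : ℕ) (x : ℕ → ZMod 4) : ℕ := (fsS m x).card
def fsU (m : ℕ) (x : ℕ → ZMod 4) : ℕ :=
  ((Finset.range (m+1)).filter (fun j => x j = 2)).card

def fsStepAt (m : ℕ) (x y : ℕ → ZMod 4) (i : ℕ) : Prop :=
  (i = 0 ∧ x 0 = 1 ∧ y 0 = 3 ∧ ∀ j, j ≠ 0 → y j = x j) ∨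
  (1 ≤ i ∧ i ≤ m ∧ (x (i-1) = 3 ∨ x i = 1) ∧ y (i-1) = x (i-1) + 1 ∧ y i = x i - 1 ∧
    ∀ j, j ≠ i - 1 → j ≠ i → y j = x j) ∨
  (i = m + 1 ∧ x m = 3 ∧ y m = 1 ∧ ∀ j, j ≠ m → y j = x j)

lemma fsT_sum (m : ℕ) (x : ℕ → ZMod 4) :
    fsT m x = ∑ j ∈ Finset.range (m+1), fsW1 (x j) := by
  rw [fsT, fsS, Finset.card_filter]; rfl

lemma fsU_sum (m : ℕ) (x : ℕ → ZMod 4) :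
    fsU m x = ∑ j ∈ Finset.range (m+1), fsW2 (x j) := by
  rw [fsU, Finset.card_filter]; rfl

lemma fs_sum_two {M : Type*} [AddCommMonoid M] (A : Finset ℕ) (g h : ℕ → M) (i j : ℕ)
    (hij : i ≠ j) (hi : i ∈ A) (hj : j ∈ A)
    (hagree : ∀ a ∈ A, a ≠ i → a ≠ j → g a = h a) :
    A.sum g + h i + h j = A.sum h + g i + g j := by
  classical
  rw [← Finset.add_sum_erase A g hi, ← Finset.add_sum_erase A h hi]
  have hj' : j ∈ A.erase i := Finset.mem_erase.2 ⟨fun h' => hij h'.symm, hj⟩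
  rw [← Finset.add_sum_erase _ g hj', ← Finset.add_sum_erase _ h hj']
  have : ∀ a ∈ (A.erase i).erase j, g a = h a := by
    intro a ha
    simp only [Finset.mem_erase] at ha
    exact hagree a ha.2.2 ha.2.1 ha.1
  rw [Finset.sum_congr rfl this]
  abel

lemma fs_sum_one {M : Type*} [AddCommMonoid M] (A : Finset ℕ) (g h : ℕ → M) (i : ℕ)
    (hi : i ∈ A) (hagree : ∀ a ∈ A, a ≠ i → g a = h a) :
    A.sum g + h i = A.sum h + g i := by
  classical
  rw [← Finset.add_sum_erase A g hi, ← Finset.add_sum_erase A h hi]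
  have : ∀ a ∈ A.erase i, g a = h a := by
    intro a ha
    simp only [Finset.mem_erase] at ha
    exact hagree a ha.2 ha.1
  rw [Finset.sum_congr rfl this]
  abel

-- local balance equations for the three kinds of steps
lemma fs_balance_bot {m : ℕ} {x y : ℕ → ZMod 4} (w : ZMod 4 → ℕ)
    (hy : y 0 = 3) (ho : ∀ j, j ≠ 0 → y j = x j) :
    (∑ j ∈ Finset.range (m+1), w (y j)) + w (x 0)
      = (∑ j ∈ Finset.range (m+1), w (x j)) + w (y 0) := by
  exact fs_sum_one _ (fun j => w (y j)) (fun j => w (x j)) 0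
    (Finset.mem_range.2 (by omega)) (fun a _ ha => by show w (y a) = w (x a); rw [ho a ha])

lemma fs_balance_top {m : ℕ} {x y : ℕ → ZMod 4} (w : ZMod 4 → ℕ)
    (ho : ∀ j, j ≠ m → y j = x j) :
    (∑ j ∈ Finset.range (m+1), w (y j)) + w (x m)
      = (∑ j ∈ Finset.range (m+1), w (x j)) + w (y m) := by
  exact fs_sum_one _ (fun j => w (y j)) (fun j => w (x j)) m
    (Finset.mem_range.2 (by omega)) (fun a _ ha => by show w (y a) = w (x a); rw [ho a ha])

lemma fs_balance_mid {m : ℕ} {x y : ℕ → ZMod 4} {i : ℕ} (w : ZMod 4 → ℕ)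
    (h1 : 1 ≤ i) (h2 : i ≤ m)
    (ho : ∀ j, j ≠ i - 1 → j ≠ i → y j = x j) :
    (∑ j ∈ Finset.range (m+1), w (y j)) + w (x (i-1)) + w (x i)
      = (∑ j ∈ Finset.range (m+1), w (x j)) + w (y (i-1)) + w (y i) := by
  exact fs_sum_two _ (fun j => w (y j)) (fun j => w (x j)) (i-1) i
    (by omega) (Finset.mem_range.2 (by omega)) (Finset.mem_range.2 (by omega))
    (fun a _ ha1 ha2 => by show w (y a) = w (x a); rw [ho a ha1 ha2])

lemma fs_w1_dec : ∀ a b : ZMod 4, (a = 3 ∨ b = 1) →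
    fsW1 (a+1) + fsW1 (b-1) ≤ fsW1 a + fsW1 b := by decide

lemma fs_w2_dec : ∀ a b : ZMod 4, (a = 3 ∨ b = 1) →
    fsW1 (a+1) + fsW1 (b-1) = fsW1 a + fsW1 b →
    fsW2 (a+1) + fsW2 (b-1) ≤ fsW2 a + fsW2 b := by decide

lemma fs_pure_dec : ∀ a b : ZMod 4, (a = 3 ∨ b = 1) →
    fsW1 (a+1) + fsW1 (b-1) = fsW1 a + fsW1 b →
    fsW2 (a+1) + fsW2 (b-1) = fsW2 a + fsW2 b →
    (a = 3 ∧ b = 0) ∨ (a = 0 ∧ b = 1) := by decide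

lemma fsT_mono {m : ℕ} {x y : ℕ → ZMod 4} {i : ℕ} (h : fsStepAt m x y i) :
    fsT m y ≤ fsT m x := by
  rcases h with ⟨_, hx, hy, ho⟩ | ⟨h1, h2, hpriv, hy1, hy2, ho⟩ | ⟨_, hx, hy, ho⟩
  · have := fs_balance_bot (m := m) (x := x) (y := y) fsW1 hy ho
    rw [← fsT_sum, ← fsT_sum] at this
    rw [hx, hy] at this
    have e1 : fsW1 (1:ZMod 4) = 1 := by decide
    have e3 : fsW1 (3:ZMod 4) = 1 := by decide
    omega
  · have := fs_balance_mid (m := m) (x := x) (y := y) fsW1 h1 h2 ho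
    rw [← fsT_sum, ← fsT_sum] at this
    rw [hy1, hy2] at this
    have hd := fs_w1_dec (x (i-1)) (x i) hpriv
    omega
  · have := fs_balance_top (m := m) (x := x) (y := y) fsW1 ho
    rw [← fsT_sum, ← fsT_sum] at this
    rw [hx, hy] at this
    have e1 : fsW1 (1:ZMod 4) = 1 := by decide
    have e3 : fsW1 (3:ZMod 4) = 1 := by decide
    omega

lemma fsU_mono {m : ℕ} {x y : ℕ → ZMod 4} {i : ℕ} (h : fsStepAt m x y i)
    (hT : fsT m y = fsT m x) : fsU m y ≤ fsU m x := by
  rcases h with ⟨_, hx, hy, ho⟩ | ⟨h1, h2, hpriv, hy1, hy2, ho⟩ | ⟨_, hx, hy, ho⟩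
  · have := fs_balance_bot (m := m) (x := x) (y := y) fsW2 hy ho
    rw [← fsU_sum, ← fsU_sum] at this
    rw [hx, hy] at this
    have e1 : fsW2 (1:ZMod 4) = 0 := by decide
    have e3 : fsW2 (3:ZMod 4) = 0 := by decide
    omega
  · have hT' := fs_balance_mid (m := m) (x := x) (y := y) fsW1 h1 h2 ho
    rw [← fsT_sum, ← fsT_sum] at hT'
    rw [hy1, hy2] at hT'
    have hU' := fs_balance_mid (m := m) (x := x) (y := y) fsW2 h1 h2 ho
    rw [← fsU_sum, ← fsU_sum] at hU'
    rw [hy1, hy2] at hU'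
    have hd1 := fs_w1_dec (x (i-1)) (x i) hpriv
    have hd2 := fs_w2_dec (x (i-1)) (x i) hpriv (by omega)
    omega
  · have := fs_balance_top (m := m) (x := x) (y := y) fsW2 ho
    rw [← fsU_sum, ← fsU_sum] at this
    rw [hx, hy] at this
    have e1 : fsW2 (1:ZMod 4) = 0 := by decide
    have e3 : fsW2 (3:ZMod 4) = 0 := by decide
    omega

lemma fsS_nonempty {m : ℕ} {x y : ℕ → ZMod 4} {i : ℕ} (h : fsStepAt m x y i) :
    (fsS m x).Nonempty := by
  rcases h with ⟨_, hx, _, _⟩ | ⟨h1, h2, hpriv, _, _, _⟩ | ⟨_, hx, _, _⟩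
  · exact ⟨0, Finset.mem_filter.2 ⟨Finset.mem_range.2 (by omega), Or.inl hx⟩⟩
  · rcases hpriv with h3 | h3
    · exact ⟨i-1, Finset.mem_filter.2 ⟨Finset.mem_range.2 (by omega), Or.inr h3⟩⟩
    · exact ⟨i, Finset.mem_filter.2 ⟨Finset.mem_range.2 (by omega), Or.inl h3⟩⟩
  · exact ⟨m, Finset.mem_filter.2 ⟨Finset.mem_range.2 (by omega), Or.inr hx⟩⟩

def fsL (m : ℕ) (x : ℕ → ZMod 4) : ℕ := WithTop.untopD 0 (fsS m x).min
def fsR (m : ℕ) (x : ℕ → ZMod 4) : ℕ := WithBot.unbotD 0 (fsS m x).max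

lemma fsS_mem {m : ℕ} {x : ℕ → ZMod 4} {j : ℕ} :
    j ∈ fsS m x ↔ j < m + 1 ∧ (x j = 1 ∨ x j = 3) := by
  simp [fsS]

lemma fsL_eq_min' {m x} (h : (fsS m x).Nonempty) : fsL m x = (fsS m x).min' h := by
  rw [fsL, ← Finset.coe_min' h]
  rfl

lemma fsR_eq_max' {m x} (h : (fsS m x).Nonempty) : fsR m x = (fsS m x).max' h := by
  rw [fsR, ← Finset.coe_max' h]
  rfl

lemma fsL_eq {m x a} (ha : a ∈ fsS m x) (hb : ∀ b ∈ fsS m x, a ≤ b) : fsL m x = a := by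
  rw [fsL_eq_min' ⟨a, ha⟩]
  exact le_antisymm (Finset.min'_le _ a ha) (Finset.le_min' _ _ _ hb)

lemma fsR_eq {m x a} (ha : a ∈ fsS m x) (hb : ∀ b ∈ fsS m x, b ≤ a) : fsR m x = a := by
  rw [fsR_eq_max' ⟨a, ha⟩]
  exact le_antisymm (Finset.max'_le _ _ _ hb) (Finset.le_max' _ a ha)

lemma fsL_mem {m x} (h : (fsS m x).Nonempty) : fsL m x ∈ fsS m x := by
  rw [fsL_eq_min' h]; exact Finset.min'_mem _ _

lemma fsR_mem {m x} (h : (fsS m x).Nonempty) : fsR m x ∈ fsS m x := by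
  rw [fsR_eq_max' h]; exact Finset.max'_mem _ _

lemma fsL_le {m x b} (hb : b ∈ fsS m x) : fsL m x ≤ b := by
  rw [fsL_eq_min' ⟨b, hb⟩]; exact Finset.min'_le _ _ hb

lemma fsR_ge {m x b} (hb : b ∈ fsS m x) : b ≤ fsR m x := by
  rw [fsR_eq_max' ⟨b, hb⟩]; exact Finset.le_max' _ _ hb

lemma fsL_lt_fsR {m x} (h : 2 ≤ (fsS m x).card) : fsL m x < fsR m x := by
  have hne : (fsS m x).Nonempty := Finset.card_pos.1 (by omega)
  rw [fsL_eq_min' hne, fsR_eq_max' hne]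
  exact Finset.min'_lt_max'_of_card _ (by omega)

def fsWV (m : ℕ) (v : ZMod 4) (j : ℕ) : ℕ :=
  if v = 1 then j else if v = 3 then m - j else 0

def fsV (m : ℕ) (x : ℕ → ZMod 4) : ℕ :=
  (∑ j ∈ Finset.range (m+1), fsWV m (x j) j)
  + (if x (fsL m x) = 1 then m + 1 else 0)
  + (if x (fsR m x) = 3 then m + 1 else 0)

lemma fsWV_one (m j : ℕ) : fsWV m 1 j = j := by
  rw [fsWV, if_pos rfl]

lemma fsWV_three (m j : ℕ) : fsWV m 3 j = m - j := by
  rw [fsWV, if_neg (by decide), if_pos rfl]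

lemma fsWV_zero (m j : ℕ) : fsWV m 0 j = 0 := by
  rw [fsWV, if_neg (by decide), if_neg (by decide)]

lemma fsS_eq_bot {m : ℕ} {x y : ℕ → ZMod 4} (hx : x 0 = 1) (hy : y 0 = 3)
    (ho : ∀ j, j ≠ 0 → y j = x j) : fsS m y = fsS m x := by
  ext j
  simp only [fsS, Finset.mem_filter, Finset.mem_range]
  by_cases hj : j = 0
  · subst hj
    rw [hy, hx]
    exact ⟨fun ⟨h1, _⟩ => ⟨h1, by decide⟩, fun ⟨h1, _⟩ => ⟨h1, by decide⟩⟩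
  · rw [ho j hj]

lemma fsS_eq_top {m : ℕ} {x y : ℕ → ZMod 4} (hx : x m = 3) (hy : y m = 1)
    (ho : ∀ j, j ≠ m → y j = x j) : fsS m y = fsS m x := by
  ext j
  simp only [fsS, Finset.mem_filter, Finset.mem_range]
  by_cases hj : j = m
  · subst hj
    rw [hy, hx]
    exact ⟨fun ⟨h1, _⟩ => ⟨h1, by decide⟩, fun ⟨h1, _⟩ => ⟨h1, by decide⟩⟩
  · rw [ho j hj]

lemma fsS_eq_1L {m i : ℕ} {x y : ℕ → ZMod 4} (h1 : 1 ≤ i) (h2 : i ≤ m)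
    (hx1 : x (i-1) = 0) (hx2 : x i = 1) (hy1 : y (i-1) = 1) (hy2 : y i = 0)
    (ho : ∀ j, j ≠ i - 1 → j ≠ i → y j = x j) :
    fsS m y = insert (i-1) ((fsS m x).erase i) := by
  ext j
  simp only [Finset.mem_insert, Finset.mem_erase, fsS_mem]
  by_cases hji : j = i - 1
  · subst hji
    rw [hy1]
    constructor
    · intro _; exact Or.inl rfl
    · intro _; exact ⟨by omega, Or.inl rfl⟩
  · by_cases hjj : j = i
    · subst hjj
      rw [hy2]
      constructor
      · rintro ⟨_, h | h⟩ <;> exact absurd h (by decide)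
      · rintro (h | ⟨h, _⟩)
        · omega
        · exact absurd rfl h
    · rw [ho j hji hjj]
      constructor
      · intro h; exact Or.inr ⟨hjj, h⟩
      · rintro (h | ⟨_, h⟩)
        · exact absurd h hji
        · exact h

lemma fsS_eq_3R {m i : ℕ} {x y : ℕ → ZMod 4} (h1 : 1 ≤ i) (h2 : i ≤ m)
    (hx1 : x (i-1) = 3) (hx2 : x i = 0) (hy1 : y (i-1) = 0) (hy2 : y i = 3)
    (ho : ∀ j, j ≠ i - 1 → j ≠ i → y j = x j) :
    fsS m y = insert i ((fsS m x).erase (i-1)) := by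
  ext j
  simp only [Finset.mem_insert, Finset.mem_erase, fsS_mem]
  by_cases hjj : j = i
  · subst hjj
    rw [hy2]
    constructor
    · intro _; exact Or.inl rfl
    · intro _; exact ⟨by omega, Or.inr rfl⟩
  · by_cases hji : j = i - 1
    · subst hji
      rw [hy1]
      constructor
      · rintro ⟨_, h | h⟩ <;> exact absurd h (by decide)
      · rintro (h | ⟨h, _⟩)
        · omega
        · exact absurd rfl h
    · rw [ho j hji hjj]
      constructor
      · intro h; exact Or.inr ⟨hji, h⟩
      · rintro (h | ⟨_, h⟩)
        · exact absurd h hjj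
        · exact h

lemma fs_mid_pure {m : ℕ} {x y : ℕ → ZMod 4} {i : ℕ} (h1 : 1 ≤ i) (h2 : i ≤ m)
    (hpriv : x (i-1) = 3 ∨ x i = 1) (hy1 : y (i-1) = x (i-1) + 1) (hy2 : y i = x i - 1)
    (ho : ∀ j, j ≠ i - 1 → j ≠ i → y j = x j)
    (hT : fsT m y = fsT m x) (hU : fsU m y = fsU m x) :
    (x (i-1) = 3 ∧ x i = 0) ∨ (x (i-1) = 0 ∧ x i = 1) := by
  have hT' := fs_balance_mid (m := m) (x := x) (y := y) fsW1 h1 h2 ho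
  rw [← fsT_sum, ← fsT_sum, hy1, hy2] at hT'
  have hU' := fs_balance_mid (m := m) (x := x) (y := y) fsW2 h1 h2 ho
  rw [← fsU_sum, ← fsU_sum, hy1, hy2] at hU'
  exact fs_pure_dec (x (i-1)) (x i) hpriv (by omega) (by omega)

lemma fsV_dec {m : ℕ} {x y : ℕ → ZMod 4} {i : ℕ} (hstep : fsStepAt m x y i)
    (ht2 : 2 ≤ fsT m x) (hT : fsT m y = fsT m x) (hU : fsU m y = fsU m x) :
    fsV m y < fsV m x := by
  have hLR : fsL m x < fsR m x := fsL_lt_fsR ht2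
  rcases hstep with ⟨_, hx, hy, ho⟩ | ⟨h1, h2, hpriv, hy1, hy2, ho⟩ | ⟨_, hx, hy, ho⟩
  · -- bottom flip
    have hSeq := fsS_eq_bot (m := m) hx hy ho
    have h0S : 0 ∈ fsS m x := fsS_mem.2 ⟨by omega, Or.inl hx⟩
    have hLx : fsL m x = 0 := fsL_eq h0S (fun b _ => Nat.zero_le b)
    have hLy : fsL m y = fsL m x := by rw [fsL, fsL, hSeq]
    have hRy : fsR m y = fsR m x := by rw [fsR, fsR, hSeq]
    have hyR : y (fsR m x) = x (fsR m x) := ho _ (by omega)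
    have hbal : (∑ j ∈ Finset.range (m+1), fsWV m (y j) j) + fsWV m (x 0) 0
        = (∑ j ∈ Finset.range (m+1), fsWV m (x j) j) + fsWV m (y 0) 0 :=
      fs_sum_one (Finset.range (m+1)) (fun j => fsWV m (y j) j) (fun j => fsWV m (x j) j) 0 (Finset.mem_range.2 (by omega))
        (fun a _ ha => by show fsWV m (y a) a = fsWV m (x a) a; rw [ho a ha])
    rw [hx, hy] at hbal
    simp only [fsWV_one, fsWV_three] at hbal
    unfold fsV
    rw [hLy, hRy, hLx, hyR, hy, hx]
    rw [if_neg (by decide), if_pos rfl]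
    exact Nat.add_lt_add_right (by omega) _
  · -- middle move
    have hbal : (∑ j ∈ Finset.range (m+1), fsWV m (y j) j) + fsWV m (x (i-1)) (i-1)
          + fsWV m (x i) i
        = (∑ j ∈ Finset.range (m+1), fsWV m (x j) j) + fsWV m (y (i-1)) (i-1)
          + fsWV m (y i) i :=
      fs_sum_two (Finset.range (m+1)) (fun j => fsWV m (y j) j) (fun j => fsWV m (x j) j) (i-1) i (by omega) (Finset.mem_range.2 (by omega))
        (Finset.mem_range.2 (by omega))
        (fun a _ ha1 ha2 => by show fsWV m (y a) a = fsWV m (x a) a; rw [ho a ha1 ha2])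
    rcases fs_mid_pure h1 h2 hpriv hy1 hy2 ho hT hU with ⟨hx1, hx2⟩ | ⟨hx1, hx2⟩
    · -- 3R : x(i-1)=3, x i = 0
      have hy1' : y (i-1) = 0 := by rw [hy1, hx1]; decide
      have hy2' : y i = 3 := by rw [hy2, hx2]; decide
      have hSeq := fsS_eq_3R h1 h2 hx1 hx2 hy1' hy2' ho
      have hi1S : i - 1 ∈ fsS m x := fsS_mem.2 ⟨by omega, Or.inr hx1⟩
      have hiS' : i ∉ fsS m x := by
        intro h
        rcases (fsS_mem.1 h).2 with h' | h' <;> rw [hx2] at h' <;> exact absurd h' (by decide)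
      rw [hx1, hx2, hy1', hy2'] at hbal
      simp only [fsWV_zero, fsWV_three] at hbal
      have hsum : (∑ j ∈ Finset.range (m+1), fsWV m (y j) j)
          < (∑ j ∈ Finset.range (m+1), fsWV m (x j) j) := by omega
      have hLle : fsL m x ≤ i - 1 := fsL_le hi1S
      have hRge : i - 1 ≤ fsR m x := fsR_ge hi1S
      rcases eq_or_lt_of_le hRge with hR | hR
      · -- rightmost particle is at i-1
        have hLlt : fsL m x < i - 1 := by omega
        have hRy : fsR m y = i := fsR_eq
          (by rw [hSeq]; exact Finset.mem_insert_self _ _)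
          (by
            intro b hb
            rw [hSeq] at hb
            rcases Finset.mem_insert.1 hb with rfl | hb
            · exact le_refl _
            · have := fsR_ge (Finset.mem_of_mem_erase hb); omega)
        have hI2 : (if y (fsR m y) = 3 then m + 1 else 0)
            = (if x (fsR m x) = 3 then m + 1 else 0) := by
          rw [hRy, hy2', ← hR, hx1]
        have hLy : fsL m y = fsL m x := fsL_eq
          (by
            rw [hSeq]
            exact Finset.mem_insert.2 (Or.inr (Finset.mem_erase.2
              ⟨by omega, fsL_mem ⟨_, hi1S⟩⟩)))
          (by
            intro b hb
            rw [hSeq] at hb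
            rcases Finset.mem_insert.1 hb with rfl | hb
            · omega
            · exact fsL_le (Finset.mem_of_mem_erase hb))
        have hI1 : (if y (fsL m y) = 1 then m + 1 else 0)
            = (if x (fsL m x) = 1 then m + 1 else 0) := by
          rw [hLy, ho _ (by omega) (by omega)]
        unfold fsV
        rw [hI1, hI2]
        exact Nat.add_lt_add_right (Nat.add_lt_add_right hsum _) _
      · -- rightmost particle is beyond i-1
        have hRne : fsR m x ≠ i := fun h => hiS' (h ▸ fsR_mem ⟨_, hi1S⟩)
        have hRgt : i < fsR m x := by omega
        have hRy : fsR m y = fsR m x := fsR_eq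
          (by
            rw [hSeq]
            exact Finset.mem_insert.2 (Or.inr (Finset.mem_erase.2
              ⟨by omega, fsR_mem ⟨_, hi1S⟩⟩)))
          (by
            intro b hb
            rw [hSeq] at hb
            rcases Finset.mem_insert.1 hb with rfl | hb
            · omega
            · exact fsR_ge (Finset.mem_of_mem_erase hb))
        have hI2 : (if y (fsR m y) = 3 then m + 1 else 0)
            = (if x (fsR m x) = 3 then m + 1 else 0) := by
          rw [hRy, ho _ (by omega) (by omega)]
        rcases eq_or_lt_of_le hLle with hL | hL
        · have hLy : fsL m y = i := fsL_eq
            (by rw [hSeq]; exact Finset.mem_insert_self _ _)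
            (by
              intro b hb
              rw [hSeq] at hb
              rcases Finset.mem_insert.1 hb with rfl | hb
              · exact le_refl _
              · have hb1 := Finset.mem_erase.1 hb
                have := fsL_le hb1.2
                omega)
          have hI1 : (if y (fsL m y) = 1 then m + 1 else 0)
              = (if x (fsL m x) = 1 then m + 1 else 0) := by
            rw [hLy, hy2', hL, hx1]
          unfold fsV
          rw [hI1, hI2]
          exact Nat.add_lt_add_right (Nat.add_lt_add_right hsum _) _
        · have hLy : fsL m y = fsL m x := fsL_eq
            (by
              rw [hSeq]
              exact Finset.mem_insert.2 (Or.inr (Finset.mem_erase.2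
                ⟨by omega, fsL_mem ⟨_, hi1S⟩⟩)))
            (by
              intro b hb
              rw [hSeq] at hb
              rcases Finset.mem_insert.1 hb with rfl | hb
              · omega
              · exact fsL_le (Finset.mem_of_mem_erase hb))
          have hI1 : (if y (fsL m y) = 1 then m + 1 else 0)
              = (if x (fsL m x) = 1 then m + 1 else 0) := by
            rw [hLy, ho _ (by omega) (by omega)]
          unfold fsV
          rw [hI1, hI2]
          exact Nat.add_lt_add_right (Nat.add_lt_add_right hsum _) _
    · -- 1L : x(i-1)=0, x i = 1
      have hy1' : y (i-1) = 1 := by rw [hy1, hx1]; decide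
      have hy2' : y i = 0 := by rw [hy2, hx2]; decide
      have hSeq := fsS_eq_1L h1 h2 hx1 hx2 hy1' hy2' ho
      have hiS : i ∈ fsS m x := fsS_mem.2 ⟨by omega, Or.inl hx2⟩
      have hi1S : i - 1 ∉ fsS m x := by
        intro h
        rcases (fsS_mem.1 h).2 with h' | h' <;> rw [hx1] at h' <;> exact absurd h' (by decide)
      rw [hx1, hx2, hy1', hy2'] at hbal
      simp only [fsWV_zero, fsWV_one] at hbal
      have hsum : (∑ j ∈ Finset.range (m+1), fsWV m (y j) j)
          < (∑ j ∈ Finset.range (m+1), fsWV m (x j) j) := by omega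
      have hLle : fsL m x ≤ i := fsL_le hiS
      have hRge : i ≤ fsR m x := fsR_ge hiS
      rcases eq_or_lt_of_le hLle with hL | hL
      · -- leftmost particle is at i
        have hRgt : i < fsR m x := by omega
        have hLy : fsL m y = i - 1 := fsL_eq
          (by rw [hSeq]; exact Finset.mem_insert_self _ _)
          (by
            intro b hb
            rw [hSeq] at hb
            rcases Finset.mem_insert.1 hb with rfl | hb
            · exact le_refl _
            · have := fsL_le (Finset.mem_of_mem_erase hb); omega)
        have hI1 : (if y (fsL m y) = 1 then m + 1 else 0)
            = (if x (fsL m x) = 1 then m + 1 else 0) := by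
          rw [hLy, hy1', hL, hx2]
        have hRy : fsR m y = fsR m x := fsR_eq
          (by
            rw [hSeq]
            exact Finset.mem_insert.2 (Or.inr (Finset.mem_erase.2
              ⟨by omega, fsR_mem ⟨_, hiS⟩⟩)))
          (by
            intro b hb
            rw [hSeq] at hb
            rcases Finset.mem_insert.1 hb with rfl | hb
            · omega
            · exact fsR_ge (Finset.mem_of_mem_erase hb))
        have hI2 : (if y (fsR m y) = 3 then m + 1 else 0)
            = (if x (fsR m x) = 3 then m + 1 else 0) := by
          rw [hRy, ho _ (by omega) (by omega)]
        unfold fsV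
        rw [hI1, hI2]
        exact Nat.add_lt_add_right (Nat.add_lt_add_right hsum _) _
      · -- leftmost particle is before i
        have hLne : fsL m x ≠ i - 1 := fun h => hi1S (h ▸ fsL_mem ⟨_, hiS⟩)
        have hLlt : fsL m x < i - 1 := by omega
        have hLy : fsL m y = fsL m x := fsL_eq
          (by
            rw [hSeq]
            exact Finset.mem_insert.2 (Or.inr (Finset.mem_erase.2
              ⟨by omega, fsL_mem ⟨_, hiS⟩⟩)))
          (by
            intro b hb
            rw [hSeq] at hb
            rcases Finset.mem_insert.1 hb with rfl | hb
            · omega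
            · exact fsL_le (Finset.mem_of_mem_erase hb))
        have hI1 : (if y (fsL m y) = 1 then m + 1 else 0)
            = (if x (fsL m x) = 1 then m + 1 else 0) := by
          rw [hLy, ho _ (by omega) (by omega)]
        rcases eq_or_lt_of_le hRge with hR | hR
        · have hRy : fsR m y = i - 1 := fsR_eq
            (by rw [hSeq]; exact Finset.mem_insert_self _ _)
            (by
              intro b hb
              rw [hSeq] at hb
              rcases Finset.mem_insert.1 hb with rfl | hb
              · exact le_refl _
              · have hb1 := Finset.mem_erase.1 hb
                have h3 := fsR_ge hb1.2
                have hbne : b ≠ i - 1 := fun hbe => hi1S (hbe ▸ hb1.2)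
                omega)
          have hI2 : (if y (fsR m y) = 3 then m + 1 else 0)
              = (if x (fsR m x) = 3 then m + 1 else 0) := by
            rw [hRy, hy1', ← hR, hx2]
          unfold fsV
          rw [hI1, hI2]
          exact Nat.add_lt_add_right (Nat.add_lt_add_right hsum _) _
        · have hRy : fsR m y = fsR m x := fsR_eq
            (by
              rw [hSeq]
              exact Finset.mem_insert.2 (Or.inr (Finset.mem_erase.2
                ⟨by omega, fsR_mem ⟨_, hiS⟩⟩)))
            (by
              intro b hb
              rw [hSeq] at hb
              rcases Finset.mem_insert.1 hb with rfl | hb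
              · omega
              · exact fsR_ge (Finset.mem_of_mem_erase hb))
          have hI2 : (if y (fsR m y) = 3 then m + 1 else 0)
              = (if x (fsR m x) = 3 then m + 1 else 0) := by
            rw [hRy, ho _ (by omega) (by omega)]
          unfold fsV
          rw [hI1, hI2]
          exact Nat.add_lt_add_right (Nat.add_lt_add_right hsum _) _
  · -- top flip
    have hSeq := fsS_eq_top (m := m) hx hy ho
    have hmS : m ∈ fsS m x := fsS_mem.2 ⟨by omega, Or.inr hx⟩
    have hRx : fsR m x = m := fsR_eq hmS (fun b hb => by
      have := (fsS_mem.1 hb).1; omega)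
    have hLy : fsL m y = fsL m x := by rw [fsL, fsL, hSeq]
    have hRy : fsR m y = fsR m x := by rw [fsR, fsR, hSeq]
    have hyL : y (fsL m x) = x (fsL m x) := ho _ (by omega)
    have hbal : (∑ j ∈ Finset.range (m+1), fsWV m (y j) j) + fsWV m (x m) m
        = (∑ j ∈ Finset.range (m+1), fsWV m (x j) j) + fsWV m (y m) m :=
      fs_sum_one (Finset.range (m+1)) (fun j => fsWV m (y j) j) (fun j => fsWV m (x j) j) m (Finset.mem_range.2 (by omega))
        (fun a _ ha => by show fsWV m (y a) a = fsWV m (x a) a; rw [ho a ha])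
    rw [hx, hy] at hbal
    simp only [fsWV_one, fsWV_three] at hbal
    unfold fsV
    rw [hLy, hRy, hRx, hyL, hy, hx]
    have e1 : (if (1:ZMod 4) = 3 then m + 1 else 0) = 0 := if_neg (by decide)
    have e2 : (if (3:ZMod 4) = 3 then m + 1 else 0) = m + 1 := if_pos rfl
    rw [e1, e2]
    omega

lemma fs_anti_const_aux : ∀ (N : ℕ) (f : ℕ → ℕ), f 0 ≤ N → (∀ k, f (k+1) ≤ f k) →
    ∃ K, ∀ k, K ≤ k → f k = f K := by
  intro N
  induction N with
  | zero =>
    intro f h0 hd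
    have hm : ∀ k, f k ≤ f 0 := by
      intro k; induction k with
      | zero => exact le_refl _
      | succ k ih => exact (hd k).trans ih
    exact ⟨0, fun k _ => by have := hm k; omega⟩
  | succ N ih =>
    intro f h0 hd
    by_cases hc : ∀ k, f k = f 0
    · exact ⟨0, fun k _ => (hc k).trans (hc 0).symm⟩
    · push_neg at hc
      obtain ⟨k0, hk0⟩ := hc
      have hm : ∀ k, f k ≤ f 0 := by
        intro k; induction k with
        | zero => exact le_refl _
        | succ k ih2 => exact (hd k).trans ih2
      obtain ⟨K, hK⟩ := ih (fun k => f (k + k0))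
        (by
          have h1 := hm k0
          have h2 := lt_of_le_of_ne h1 hk0
          show f (0 + k0) ≤ N
          rw [Nat.zero_add]
          omega)
        (fun k => by
          show f (k + 1 + k0) ≤ f (k + k0)
          rw [Nat.add_right_comm]
          exact hd (k + k0))
      refine ⟨K + k0, fun k hk => ?_⟩
      have h1 := hK (k - k0) (by omega)
      rw [show k - k0 + k0 = k by omega] at h1
      exact h1

lemma fs_anti_const (f : ℕ → ℕ) (hd : ∀ k, f (k+1) ≤ f k) :
    ∃ K, ∀ k, K ≤ k → f k = f K :=
  fs_anti_const_aux (f 0) f (le_refl _) hd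

lemma fsT_pos {m : ℕ} {x y : ℕ → ZMod 4} {i : ℕ} (h : fsStepAt m x y i) :
    1 ≤ fsT m x :=
  Finset.card_pos.2 (fsS_nonempty h)

lemma fs_eventual (m : ℕ) (e : ℕ → ℕ → ZMod 4) (c : ℕ → ℕ)
    (hstep : ∀ k, fsStepAt m (e k) (e (k+1)) (c k)) :
    ∃ K, (∀ k, K ≤ k → fsT m (e k) = 1) ∧
      (∀ k, K ≤ k → fsU m (e (k+1)) = fsU m (e k)) := by
  obtain ⟨K1, hK1⟩ := fs_anti_const (fun k => fsT m (e k)) (fun k => fsT_mono (hstep k))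
  have hTconst : ∀ k, K1 ≤ k → fsT m (e k) = fsT m (e K1) := hK1
  have hUdec : ∀ k, fsU m (e (k + K1 + 1)) ≤ fsU m (e (k + K1)) := by
    intro k
    exact fsU_mono (hstep (k + K1))
      (by rw [hTconst (k + K1 + 1) (by omega), hTconst (k + K1) (by omega)])
  obtain ⟨K2, hK2⟩ := fs_anti_const (fun k => fsU m (e (k + K1)))
    (fun k => by
      show fsU m (e (k + 1 + K1)) ≤ fsU m (e (k + K1))
      rw [show k + 1 + K1 = k + K1 + 1 by omega]
      exact hUdec k)
  set K := K2 + K1 with hKdef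
  have hUconst : ∀ k, K ≤ k → fsU m (e k) = fsU m (e K) := by
    intro k hk
    have h1 := hK2 (k - K1) (by omega)
    rw [show k - K1 + K1 = k by omega] at h1
    rw [h1]
  have hT1 : fsT m (e K) = 1 := by
    have hge : 1 ≤ fsT m (e K) := fsT_pos (hstep K)
    by_contra hne
    have ht2 : 2 ≤ fsT m (e K) := by omega
    have hdec : ∀ j, fsV m (e (K + j)) + j ≤ fsV m (e K) := by
      intro j
      induction j with
      | zero => simp
      | succ j ihj =>
        have hlt : fsV m (e (K + j + 1)) < fsV m (e (K + j)) := by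
          apply fsV_dec (hstep (K + j))
          · rw [hTconst (K + j) (by omega), ← hTconst K (by omega)]; exact ht2
          · rw [hTconst (K + j + 1) (by omega), hTconst (K + j) (by omega)]
          · rw [hUconst (K + j + 1) (by omega), hUconst (K + j) (by omega)]
        have : K + (j + 1) = K + j + 1 := by omega
        rw [this]
        omega
    have := hdec (fsV m (e K) + 1)
    omega
  refine ⟨K, fun k hk => ?_, fun k hk => ?_⟩
  · rw [hTconst k (by omega), ← hTconst K (by omega), hT1]
  · rw [hUconst (k+1) (by omega), hUconst k (by omega)]

lemma fsL_singleton {m : ℕ} {x : ℕ → ZMod 4} {a : ℕ} (h : fsS m x = {a}) :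
    fsL m x = a := by
  rw [fsL, h, Finset.min_singleton]
  rfl

lemma fs_token_step {m : ℕ} {x y : ℕ → ZMod 4} {i : ℕ} (hstep : fsStepAt m x y i)
    (hU : fsU m y = fsU m x) (hT : fsT m y = fsT m x) {P : ℕ} (hP : fsS m x = {P}) :
    (x P = 1 ∧ 1 ≤ P ∧ i = P ∧ fsS m y = {P - 1} ∧ y (P-1) = 1)
    ∨ (x P = 1 ∧ P = 0 ∧ i = 0 ∧ fsS m y = {0} ∧ y 0 = 3)
    ∨ (x P = 3 ∧ P < m ∧ i = P + 1 ∧ fsS m y = {P + 1} ∧ y (P+1) = 3)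
    ∨ (x P = 3 ∧ P = m ∧ i = m + 1 ∧ fsS m y = {m} ∧ y m = 1) := by
  have hmem : ∀ j, j ∈ fsS m x ↔ j = P := by intro j; rw [hP, Finset.mem_singleton]
  have hPm : P ≤ m := by
    have := (fsS_mem.1 ((hmem P).2 rfl)).1; omega
  rcases hstep with ⟨hi0, hx, hy, ho⟩ | ⟨h1, h2, hpriv, hy1, hy2, ho⟩ | ⟨hi0, hx, hy, ho⟩
  · -- bottom
    have hP0 : P = 0 := ((hmem 0).1 (fsS_mem.2 ⟨by omega, Or.inl hx⟩)).symm
    subst hP0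
    exact Or.inr (Or.inl ⟨hx, rfl, hi0, by rw [fsS_eq_bot hx hy ho, hP], hy⟩)
  · -- middle
    rcases fs_mid_pure h1 h2 hpriv hy1 hy2 ho hT hU with ⟨hx1, hx2⟩ | ⟨hx1, hx2⟩
    · -- 3R
      have hPi : P = i - 1 := ((hmem (i-1)).1 (fsS_mem.2 ⟨by omega, Or.inr hx1⟩)).symm
      have hy1' : y (i-1) = 0 := by rw [hy1, hx1]; decide
      have hy2' : y i = 3 := by rw [hy2, hx2]; decide
      have hSy : fsS m y = {i} := by
        rw [fsS_eq_3R h1 h2 hx1 hx2 hy1' hy2' ho, hP, ← hPi, Finset.erase_singleton]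
        rfl
      refine Or.inr (Or.inr (Or.inl ?_))
      rw [hPi]
      refine ⟨hx1, by omega, by omega, ?_, ?_⟩
      · rw [hSy]; congr 1; omega
      · rw [show i - 1 + 1 = i by omega]; exact hy2'
    · -- 1L
      have hPi : P = i := ((hmem i).1 (fsS_mem.2 ⟨by omega, Or.inl hx2⟩)).symm
      have hy1' : y (i-1) = 1 := by rw [hy1, hx1]; decide
      have hy2' : y i = 0 := by rw [hy2, hx2]; decide
      have hSy : fsS m y = {i - 1} := by
        rw [fsS_eq_1L h1 h2 hx1 hx2 hy1' hy2' ho, hP, hPi, Finset.erase_singleton]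
        rfl
      subst hPi
      exact Or.inl ⟨hx2, h1, rfl, hSy, hy1'⟩
  · -- top
    have hPm' : P = m := ((hmem m).1 (fsS_mem.2 ⟨by omega, Or.inr hx⟩)).symm
    subst hPm'
    exact Or.inr (Or.inr (Or.inr ⟨hx, rfl, hi0, by rw [fsS_eq_top hx hy ho, hP], hy⟩))

def fsMu (m i P : ℕ) (v : ZMod 4) : ℕ :=
  if v = 1 then (if i ≤ P then P - i else P + i)
  else (if P < i then i - P - 1 else (m - P) + 1 + (m - i))

lemma fs_token_reach (m : ℕ) (e : ℕ → ℕ → ZMod 4) (c : ℕ → ℕ)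
    (hstep : ∀ k, fsStepAt m (e k) (e (k+1)) (c k)) (K : ℕ)
    (hT : ∀ k, K ≤ k → fsT m (e k) = 1)
    (hU : ∀ k, K ≤ k → fsU m (e (k+1)) = fsU m (e k))
    (i : ℕ) (hi : i ≤ m + 1) :
    ∀ d k, K ≤ k → fsMu m i (fsL m (e k)) (e k (fsL m (e k))) = d →
      ∃ k', k ≤ k' ∧ c k' = i := by
  intro d
  induction d using Nat.strong_induction_on with
  | _ d ih =>
    intro k hk hmu
    obtain ⟨P, hP⟩ := Finset.card_eq_one.1 (hT k hk)
    have hPm : P ≤ m := by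
      have hPS : P ∈ fsS m (e k) := by rw [hP]; exact Finset.mem_singleton_self _
      have := (fsS_mem.1 hPS).1; omega
    have hPL : fsL m (e k) = P := fsL_singleton hP
    rw [hPL] at hmu
    have hTy : fsT m (e (k+1)) = fsT m (e k) := by
      rw [hT (k+1) (by omega), hT k hk]
    rcases fs_token_step (hstep k) (hU k hk) hTy hP with
      ⟨hxP, hP1, hci, hSy, hyv⟩ | ⟨hxP, hP0, hci, hSy, hyv⟩ |
      ⟨hxP, hPlt, hci, hSy, hyv⟩ | ⟨hxP, hPm', hci, hSy, hyv⟩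
    · -- 1 moves left
      by_cases hip : i = P
      · exact ⟨k, le_refl _, by rw [hci, hip]⟩
      · have hL' : fsL m (e (k+1)) = P - 1 := fsL_singleton hSy
        have hlt : fsMu m i (P-1) (1 : ZMod 4) < d := by
          rw [← hmu, hxP]
          unfold fsMu
          rw [if_pos rfl, if_pos rfl]
          split_ifs <;> omega
        obtain ⟨k', hk1, hk2⟩ := ih _ hlt (k+1) (by omega) (by rw [hL', hyv])
        exact ⟨k', by omega, hk2⟩
    · -- bottom flip
      by_cases hip : i = 0
      · exact ⟨k, le_refl _, by rw [hci, hip]⟩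
      · have hL' : fsL m (e (k+1)) = 0 := fsL_singleton hSy
        have hlt : fsMu m i 0 (3 : ZMod 4) < d := by
          rw [← hmu, hxP, hP0]
          unfold fsMu
          rw [if_neg (by decide), if_pos rfl]
          split_ifs <;> omega
        obtain ⟨k', hk1, hk2⟩ := ih _ hlt (k+1) (by omega) (by rw [hL', hyv])
        exact ⟨k', by omega, hk2⟩
    · -- 3 moves right
      by_cases hip : i = P + 1
      · exact ⟨k, le_refl _, by rw [hci, hip]⟩
      · have hL' : fsL m (e (k+1)) = P + 1 := fsL_singleton hSy
        have hlt : fsMu m i (P+1) (3 : ZMod 4) < d := by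
          rw [← hmu, hxP]
          unfold fsMu
          rw [if_neg (show ¬ (3:ZMod 4) = 1 by decide),
            if_neg (show ¬ (3:ZMod 4) = 1 by decide)]
          split_ifs <;> omega
        obtain ⟨k', hk1, hk2⟩ := ih _ hlt (k+1) (by omega) (by rw [hL', hyv])
        exact ⟨k', by omega, hk2⟩
    · -- top flip
      by_cases hip : i = m + 1
      · exact ⟨k, le_refl _, by rw [hci, hip]⟩
      · have hL' : fsL m (e (k+1)) = m := fsL_singleton hSy
        have hlt : fsMu m i m (1 : ZMod 4) < d := by
          rw [← hmu, hxP, hPm']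
          unfold fsMu
          rw [if_pos (show (1:ZMod 4) = 1 from rfl), if_neg (show ¬ (3:ZMod 4) = 1 by decide)]
          split_ifs <;> omega
        obtain ⟨k', hk1, hk2⟩ := ih _ hlt (k+1) (by omega) (by rw [hL', hyv])
        exact ⟨k', by omega, hk2⟩

theorem fs_abstract (m : ℕ) (e : ℕ → ℕ → ZMod 4) (c : ℕ → ℕ)
    (hstep : ∀ k, fsStepAt m (e k) (e (k+1)) (c k)) :
    (∀ i, i ≤ m + 1 → ∀ k, ∃ k', k ≤ k' ∧ c k' = i) ∧
    ∃ K, ∀ k, K ≤ k → fsT m (e k) = 1 := by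
  obtain ⟨K, hKT, hKU⟩ := fs_eventual m e c hstep
  constructor
  · intro i hi k
    obtain ⟨k', hk1, hk2⟩ := fs_token_reach m e c hstep K hKT hKU i hi
      (fsMu m i (fsL m (e (max k K))) (e (max k K) (fsL m (e (max k K)))))
      (max k K) (le_max_right _ _) rfl
    exact ⟨k', le_trans (le_max_left _ _) hk1, hk2⟩
  · exact ⟨K, hKT⟩

section FinLemmas
variable {n : ℕ} [NeZero n]

lemma finVal0 : ((0 : Fin n)).val = 0 := rfl

lemma finEq0 {i : Fin n} : i = 0 ↔ i.val = 0 := by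
  rw [Fin.ext_iff, finVal0]

lemma finVal1 (hn : 3 ≤ n) : ((1 : Fin n)).val = 1 := by
  rw [Fin.val_one']
  exact Nat.mod_eq_of_lt (by omega)

lemma finSub1 (hn : 3 ≤ n) (i : Fin n) (h : 0 < i.val) :
    i - 1 = ⟨i.val - 1, by omega⟩ := by
  apply Fin.ext
  rw [Fin.sub_def]
  simp only [finVal1 hn]
  show (n - 1 + i.val) % n = i.val - 1
  rw [show n - 1 + i.val = (i.val - 1) + 1 * n by omega, Nat.add_mul_mod_self_right,
    Nat.mod_eq_of_lt (by omega)]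

lemma finAdd1 (hn : 3 ≤ n) (i : Fin n) (h : i.val + 1 < n) :
    i + 1 = ⟨i.val + 1, h⟩ := by
  apply Fin.ext
  rw [Fin.add_def]
  simp only [finVal1 hn]
  show (i.val + 1) % n = i.val + 1
  exact Nat.mod_eq_of_lt h

lemma finOne (hn : 3 ≤ n) : (1 : Fin n) = ⟨1, by omega⟩ := Fin.ext (finVal1 hn)

end FinLemmas

section PayoffLemmas
variable {n : ℕ} [NeZero n]

lemma fourPayoff_bot (s : Fin n → ZMod 4) :
    fourPayoff n s 0 = if s 0 + 1 = s 1 then 0 else 1 := by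
  rw [fourPayoff, if_pos rfl]

lemma fourPayoff_top (s : Fin n → ZMod 4) (i : Fin n) (h0 : i ≠ 0) (ht : i.val = n - 1) :
    fourPayoff n s i = if s i + 1 = s (i - 1) then 0 else 1 := by
  rw [fourPayoff, if_neg h0, if_pos ht]

lemma fourPayoff_mid (s : Fin n → ZMod 4) (i : Fin n) (h0 : i ≠ 0) (ht : i.val ≠ n - 1) :
    fourPayoff n s i =
      if (s i + 1 = s (i - 1) ∨ s i + 1 = s (i + 1)) ∧
         (s i + 2 = s (i - 1) ∨ s i + 2 = s (i + 1)) then 0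
      else if s i + 1 = s (i - 1) ∨ s i + 1 = s (i + 1) then 1
      else 2 := by
  rw [fourPayoff, if_neg h0, if_neg ht]

lemma four_notBR_bot (hn : 3 ≤ n) (s : Fin n → ZMod 4) (hv : fourValid n 0 (s 0)) :
    ¬ BestResponseOn (fourPayoff n) (fourValid n) s 0 ↔ s 0 + 1 = s 1 := by
  have h1ne0 : (1 : Fin n) ≠ 0 := by
    rw [Ne, finEq0, finVal1 hn]
    omega
  constructor
  · intro h
    by_contra hc
    apply h
    intro c _
    rw [fourPayoff_bot s, if_neg hc]
    rw [fourPayoff_bot]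
    split_ifs <;> omega
  · intro hcond hBR
    have hval : fourValid n 0 (s 0 + 2) := by
      rw [fourValid, if_pos rfl]
      rw [fourValid, if_pos rfl] at hv
      rcases hv with h | h <;> rw [h]
      · exact Or.inr (by decide)
      · exact Or.inl (by decide)
    have := hBR (s 0 + 2) hval
    rw [fourPayoff_bot, fourPayoff_bot, if_pos hcond] at this
    rw [Function.update_self, Function.update_of_ne h1ne0] at this
    rw [if_neg] at this
    · omega
    · rw [← hcond]
      intro h
      have h2 : s 0 + (2 + 1) = s 0 + 1 := by rw [← add_assoc]; exact h
      have := add_left_cancel h2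
      exact absurd this (by decide)

lemma four_notBR_top (hn : 3 ≤ n) (s : Fin n → ZMod 4) (i : Fin n)
    (ht : i.val = n - 1) (hv : fourValid n i (s i)) :
    ¬ BestResponseOn (fourPayoff n) (fourValid n) s i ↔ s i + 1 = s (i - 1) := by
  have h0 : i ≠ 0 := by rw [Ne, finEq0]; omega
  have hsub : i - 1 ≠ i := by
    rw [finSub1 hn i (by omega)]
    intro h
    have h2 : i.val - 1 = i.val := by simpa using congrArg Fin.val h
    omega
  constructor
  · intro h
    by_contra hc
    apply h
    intro c _
    rw [fourPayoff_top s i h0 ht, if_neg hc]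
    rw [fourPayoff_top _ i h0 ht]
    split_ifs <;> omega
  · intro hcond hBR
    have hval : fourValid n i (s i + 2) := by
      rw [fourValid, if_neg h0, if_pos ht]
      rw [fourValid, if_neg h0, if_pos ht] at hv
      rcases hv with h | h <;> rw [h]
      · exact Or.inr (by decide)
      · exact Or.inl (by decide)
    have := hBR (s i + 2) hval
    rw [fourPayoff_top _ i h0 ht, fourPayoff_top _ i h0 ht, if_pos hcond] at this
    rw [Function.update_self, Function.update_of_ne hsub] at this
    rw [if_neg] at this
    · omega
    · rw [← hcond]
      intro h
      have h2 : s i + (2 + 1) = s i + 1 := by rw [← add_assoc]; exact h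
      have := add_left_cancel h2
      exact absurd this (by decide)

lemma four_notBR_mid (hn : 3 ≤ n) (s : Fin n → ZMod 4) (i : Fin n)
    (h0 : 0 < i.val) (ht : i.val < n - 1) :
    ¬ BestResponseOn (fourPayoff n) (fourValid n) s i ↔
      (s i + 1 = s (i - 1) ∨ s i + 1 = s (i + 1)) := by
  have h0' : i ≠ 0 := by rw [Ne, finEq0]; omega
  have ht' : i.val ≠ n - 1 := by omega
  have hsub : i - 1 ≠ i := by
    rw [finSub1 hn i h0]
    intro h
    have h2 : i.val - 1 = i.val := by simpa using congrArg Fin.val h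
    omega
  have hadd : i + 1 ≠ i := by
    rw [finAdd1 hn i (by omega)]
    intro h
    have h2 : i.val + 1 = i.val := by simpa using congrArg Fin.val h
    omega
  constructor
  · intro h
    by_contra hc
    apply h
    intro c _
    rw [fourPayoff_mid s i h0' ht', if_neg (fun hand => hc hand.1), if_neg hc]
    rw [fourPayoff_mid _ i h0' ht']
    split_ifs <;> omega
  · intro hcond hBR
    set L := s (i - 1) with hL
    set R := s (i + 1) with hR
    set c : ZMod 4 := if R = L + 1 then L + 1 else L with hc
    have hval : fourValid n i c := by
      rw [fourValid, if_neg h0', if_neg ht']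
      trivial
    have hkey := hBR c hval
    have hc1 : c + 1 ≠ L ∧ c + 1 ≠ R := by
      by_cases hr : R = L + 1
      · rw [hc, if_pos hr, hr]
        constructor
        · intro h
          have h2 : L + (1 + 1) = L + 0 := by rw [← add_assoc, add_zero]; exact h
          exact absurd (add_left_cancel h2) (by decide)
        · intro h
          have h2 : L + (1 + 1) = L + 1 := by rw [← add_assoc]; exact h
          exact absurd (add_left_cancel h2) (by decide)
      · rw [hc, if_neg hr]
        constructor
        · intro h
          have h2 : L + 1 = L + 0 := by rw [add_zero]; exact h
          exact absurd (add_left_cancel h2) (by decide)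
        · intro h
          exact hr h.symm
    rw [fourPayoff_mid _ i h0' ht', fourPayoff_mid _ i h0' ht'] at hkey
    rw [Function.update_self, Function.update_of_ne hsub, Function.update_of_ne hadd,
      ← hL, ← hR] at hkey
    rw [if_neg (fun hand => by rcases hand.1 with h | h; exacts [hc1.1 h, hc1.2 h]),
      if_neg (fun hor => by rcases hor with h | h; exacts [hc1.1 h, hc1.2 h])] at hkey
    split_ifs at hkey <;> try omega
    all_goals tauto
  
end PayoffLemmas


section Glue
variable {n : ℕ} [NeZero n]

def fourE (n : ℕ) [NeZero n] (s : Fin n → ZMod 4) (j : ℕ) : ZMod 4 :=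
  s ⟨min (j+1) (n-1), by have := Nat.pos_of_ne_zero (NeZero.ne n); omega⟩
  - s ⟨min j (n-1), by have := Nat.pos_of_ne_zero (NeZero.ne n); omega⟩

lemma fourE_eq (s : Fin n → ZMod 4) (j : ℕ) (hj : j < n - 1) :
    fourE n s j = s ⟨j+1, by omega⟩ - s ⟨j, by omega⟩ := by
  unfold fourE
  rw [congrArg s (Fin.mk_eq_mk.mpr (show min (j+1) (n-1) = j+1 by omega)),
    congrArg s (Fin.mk_eq_mk.mpr (show min j (n-1) = j by omega))]

lemma fourE_junk (s : Fin n → ZMod 4) (j : ℕ) (hj : n - 1 ≤ j) : fourE n s j = 0 := by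
  unfold fourE
  exact sub_eq_zero_of_eq (congrArg s (Fin.mk_eq_mk.mpr (by omega)))

lemma fourE_frozen (s : Fin n → ZMod 4) (i : Fin n) (v : ZMod 4) (j : ℕ)
    (h1 : min (j+1) (n-1) ≠ i.val) (h2 : min j (n-1) ≠ i.val) :
    fourE n (Function.update s i v) j = fourE n s j := by
  unfold fourE
  rw [Function.update_of_ne (fun h => h1 (congrArg Fin.val h)),
    Function.update_of_ne (fun h => h2 (congrArg Fin.val h))]

lemma zA : ∀ a b : ZMod 4, a + 1 = b → b - a = 1 := by decide
lemma zB : ∀ a b : ZMod 4, b - a = 1 → a + 1 = b := by decide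
lemma zC : ∀ a b : ZMod 4, b + 1 = a → b - a = 3 := by decide
lemma zD : ∀ a b : ZMod 4, b - a = 3 → b + 1 = a := by decide
lemma zE : ∀ a : ZMod 4, (a+1) - (a+2) = 3 := by decide
lemma zG : ∀ a : ZMod 4, (a+2) - (a+1) = 1 := by decide
lemma zH : ∀ a b : ZMod 4, (a + 1) - b = (a - b) + 1 := by intro a b; ring
lemma zI : ∀ a b : ZMod 4, b - (a + 1) = (b - a) - 1 := by intro a b; ring

end Glue


section Bridge
variable {n : ℕ} [NeZero n]

lemma fourE_bot (hn : 3 ≤ n) (s : Fin n → ZMod 4) : fourE n s 0 = s 1 - s 0 := by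
  rw [fourE_eq s 0 (by omega)]
  have e1 : (⟨0+1, by omega⟩ : Fin n) = 1 := (finOne hn).symm
  have e2 : (⟨0, by omega⟩ : Fin n) = 0 := Fin.ext rfl
  rw [e1, e2]

lemma fourE_at_sub (hn : 3 ≤ n) (s : Fin n → ZMod 4) (i : Fin n)
    (h0 : 0 < i.val) (ht : i.val ≤ n - 1) :
    fourE n s (i.val - 1) = s i - s (i - 1) := by
  rw [fourE_eq s (i.val - 1) (by omega)]
  have e1 : (⟨i.val - 1 + 1, by omega⟩ : Fin n) = i := by
    apply Fin.ext
    show i.val - 1 + 1 = i.val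
    omega
  have e2 : (⟨i.val - 1, by omega⟩ : Fin n) = i - 1 := by
    rw [finSub1 hn i h0]
  rw [e1, e2]

lemma fourE_at_self (hn : 3 ≤ n) (s : Fin n → ZMod 4) (i : Fin n)
    (ht : i.val < n - 1) :
    fourE n s i.val = s (i + 1) - s i := by
  rw [fourE_eq s i.val (by omega)]
  have e1 : (⟨i.val + 1, by omega⟩ : Fin n) = i + 1 := by
    rw [finAdd1 hn i (by omega)]
  have e2 : (⟨i.val, by omega⟩ : Fin n) = i := Fin.ext rfl
  rw [e1, e2]

lemma finSubNe (hn : 3 ≤ n) (i : Fin n) (h0 : 0 < i.val) : i - 1 ≠ i := by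
  rw [finSub1 hn i h0]
  intro h
  have h2 : i.val - 1 = i.val := by simpa using congrArg Fin.val h
  omega

lemma finAddNe (hn : 3 ≤ n) (i : Fin n) (ht : i.val + 1 < n) : i + 1 ≠ i := by
  rw [finAdd1 hn i ht]
  intro h
  have h2 : i.val + 1 = i.val := by simpa using congrArg Fin.val h
  omega



set_option maxHeartbeats 1000000 in
lemma four_step_translate (n : ℕ) [NeZero n] (hn : 3 ≤ n)
    (f : (Fin n → ZMod 4) → Fin n → ZMod 4)
    (hf0 : ∀ s : Fin n → ZMod 4, f s 0 = s 0 + 2)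
    (hfmid : ∀ (s : Fin n → ZMod 4) (i : Fin n),
      0 < i.val → i.val < n - 1 → f s i = s i + 1)
    (hftop : ∀ s : Fin n → ZMod 4,
      f s ⟨n - 1, Nat.sub_lt (by omega) Nat.one_pos⟩ = s ⟨n - 1, Nat.sub_lt (by omega) Nat.one_pos⟩ + 2)
    (s : Fin n → ZMod 4) (i : Fin n)
    (hv : ∀ j, fourValid n j (s j))
    (hnBR : ¬ BestResponseOn (fourPayoff n) (fourValid n) s i) :
    fsStepAt (n-2) (fourE n s) (fourE n (Function.update s i (f s i))) i.val := by
  by_cases h0 : i = 0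
  · -- bottom machine
    subst h0
    left
    have hcond : s 0 + 1 = s 1 := (four_notBR_bot hn s (hv 0)).1 hnBR
    have h1ne0 : (1 : Fin n) ≠ 0 := by
      rw [Ne, finEq0, finVal1 hn]; omega
    refine ⟨finVal0, ?_, ?_, ?_⟩
    · rw [fourE_bot hn s]
      exact zA _ _ hcond
    · rw [fourE_bot hn (Function.update s 0 (f s 0)),
        Function.update_self, Function.update_of_ne h1ne0, hf0, ← hcond]
      exact zE _
    · intro j hj
      apply fourE_frozen
      · rw [finVal0]; omega
      · rw [finVal0]; omega
  · by_cases htp : i.val = n - 1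
    · -- top machine
      right; right
      have hcond : s i + 1 = s (i - 1) := (four_notBR_top hn s i htp (hv i)).1 hnBR
      have hsubne : i - 1 ≠ i := finSubNe hn i (by omega)
      have hfi : f s i = s i + 2 := by
        have hieq : i = ⟨n-1, by omega⟩ := Fin.ext htp
        rw [hieq]
        exact hftop s
      have hm2 : n - 2 = i.val - 1 := by omega
      refine ⟨by omega, ?_, ?_, ?_⟩
      · rw [hm2, fourE_at_sub hn s i (by omega) (by omega)]
        exact zC _ _ hcond
      · rw [hm2, fourE_at_sub hn (Function.update s i (f s i)) i (by omega) (by omega),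
          Function.update_self, Function.update_of_ne hsubne, hfi, ← hcond]
        exact zG _
      · intro j hj
        rcases lt_or_gt_of_ne hj with hlt | hgt
        · apply fourE_frozen <;> omega
        · rw [fourE_junk _ j (by omega), fourE_junk s j (by omega)]
    · -- middle machine
      right; left
      have h0v : 0 < i.val := Nat.pos_of_ne_zero (fun h => h0 (finEq0.2 h))
      have htv : i.val < n - 1 := lt_of_le_of_ne (by omega) htp
      have hcond := (four_notBR_mid hn s i h0v htv).1 hnBR
      have hfi : f s i = s i + 1 := hfmid s i h0v htv
      have hsubne : i - 1 ≠ i := finSubNe hn i h0v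
      have haddne : i + 1 ≠ i := finAddNe hn i (by omega)
      refine ⟨by omega, by omega, ?_, ?_, ?_, ?_⟩
      · rcases hcond with h | h
        · left
          rw [fourE_at_sub hn s i h0v (by omega)]
          exact zC _ _ h
        · right
          rw [fourE_at_self hn s i htv]
          exact zA _ _ h
      · rw [fourE_at_sub hn (Function.update s i (f s i)) i h0v (by omega),
          fourE_at_sub hn s i h0v (by omega),
          Function.update_self, Function.update_of_ne hsubne, hfi]
        exact zH _ _
      · rw [fourE_at_self hn (Function.update s i (f s i)) i htv,
          fourE_at_self hn s i htv,
          Function.update_self, Function.update_of_ne haddne, hfi]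
        exact zI _ _
      · intro j hj1 hj2
        apply fourE_frozen <;> omega

section B2
variable {n : ℕ} [NeZero n]

set_option maxHeartbeats 1000000 in
lemma four_legit (hn : 3 ≤ n) (s : Fin n → ZMod 4)
    (hv : ∀ j, fourValid n j (s j))
    (h1 : fsT (n-2) (fourE n s) = 1) :
    ∃! i : Fin n, ¬ BestResponseOn (fourPayoff n) (fourValid n) s i := by
  obtain ⟨j0, hj0⟩ := Finset.card_eq_one.1 h1
  have hmem : ∀ j, j ∈ fsS (n-2) (fourE n s) ↔ j = j0 := fun j => by
    rw [hj0, Finset.mem_singleton]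
  have hj0S := (hmem j0).2 rfl
  have hj0m : j0 < n - 1 := by have := (fsS_mem.1 hj0S).1; omega
  have hcrit : ∀ j, j < n - 1 → (fourE n s j = 1 ∨ fourE n s j = 3) → j = j0 :=
    fun j hj hval => (hmem j).1 (fsS_mem.2 ⟨by omega, hval⟩)
  -- characterisation of privileged machines
  have hchar : ∀ i' : Fin n, ¬ BestResponseOn (fourPayoff n) (fourValid n) s i' →
      (fourE n s i'.val = 1 ∧ i'.val < n - 1) ∨
      (fourE n s (i'.val - 1) = 3 ∧ 0 < i'.val) := by
    intro i' hi'
    by_cases h0' : i' = 0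
    · subst h0'
      left
      have hc := (four_notBR_bot hn s (hv 0)).1 hi'
      constructor
      · show fourE n s (0:ℕ) = 1
        rw [fourE_bot hn s]
        exact zA _ _ hc
      · show (0:ℕ) < n - 1
        omega
    · by_cases htp' : i'.val = n - 1
      · right
        have hc := (four_notBR_top hn s i' htp' (hv i')).1 hi'
        exact ⟨by rw [fourE_at_sub hn s i' (by omega) (by omega)]; exact zC _ _ hc,
          by omega⟩
      · have h0v' : 0 < i'.val := Nat.pos_of_ne_zero (fun h => h0' (finEq0.2 h))
        have htv' : i'.val < n - 1 := lt_of_le_of_ne (by omega) htp'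
        rcases (four_notBR_mid hn s i' h0v' htv').1 hi' with h | h
        · right
          exact ⟨by rw [fourE_at_sub hn s i' h0v' (by omega)]; exact zC _ _ h, h0v'⟩
        · left
          exact ⟨by rw [fourE_at_self hn s i' htv']; exact zA _ _ h, htv'⟩
  rcases (fsS_mem.1 hj0S).2 with hv1 | hv3
  · -- a 1-token at j0 : machine j0 is the unique privileged one
    refine ⟨⟨j0, by omega⟩, ?_, ?_⟩
    · by_cases hz : j0 = 0
      · subst hz
        have h0eq : (⟨0, by omega⟩ : Fin n) = 0 := Fin.ext rfl
        rw [h0eq]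
        refine (four_notBR_bot hn s (hv 0)).2 ?_
        refine zB _ _ ?_
        rw [← fourE_bot hn s]
        exact hv1
      · set i0 : Fin n := ⟨j0, by omega⟩ with hi0
        have h0v : 0 < i0.val := by simpa [hi0] using Nat.pos_of_ne_zero hz
        have htv : i0.val < n - 1 := by simpa [hi0] using hj0m
        refine (four_notBR_mid hn s i0 h0v htv).2 (Or.inr ?_)
        refine zB _ _ ?_
        rw [← fourE_at_self hn s i0 htv]
        exact hv1
    · intro i' hi'
      rcases hchar i' hi' with ⟨h1', hlt'⟩ | ⟨h3', hpos'⟩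
      · exact Fin.ext (show i'.val = j0 from hcrit _ hlt' (Or.inl h1'))
      · exfalso
        have heq := hcrit _ (by omega) (Or.inr h3')
        rw [heq, hv1] at h3'
        exact absurd h3' (by decide)
  · -- a 3-token at j0 : machine j0+1 is the unique privileged one
    refine ⟨⟨j0 + 1, by omega⟩, ?_, ?_⟩
    · set i0 : Fin n := ⟨j0 + 1, by omega⟩ with hi0
      have h0v : 0 < i0.val := by simp [hi0]
      have hvaleq : i0.val - 1 = j0 := by simp [hi0]
      have hkey : s i0 + 1 = s (i0 - 1) := by
        refine zD _ _ ?_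
        rw [← fourE_at_sub hn s i0 h0v (by simp [hi0]; omega), hvaleq]
        exact hv3
      by_cases hz : i0.val = n - 1
      · exact (four_notBR_top hn s i0 hz (hv i0)).2 hkey
      · have htv : i0.val < n - 1 := by
          have : i0.val ≤ n - 1 := by omega
          omega
        exact (four_notBR_mid hn s i0 h0v htv).2 (Or.inl hkey)
    · intro i' hi'
      rcases hchar i' hi' with ⟨h1', hlt'⟩ | ⟨h3', hpos'⟩
      · exfalso
        have heq := hcrit _ hlt' (Or.inl h1')
        rw [heq, hv3] at h1'
        exact absurd h1' (by decide)
      · have heq := hcrit _ (by omega) (Or.inr h3')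
        exact Fin.ext (show i'.val = j0 + 1 by omega)


end B2

/-- In the four-state game on `n ≥ 3` players, every scheduler `f`
(a function that, at any valid joint strategy `s` and any player `i` not playing a
best response in `s`, returns an allowed better response `f s i` for `i`) satisfying
`f s 0 = s 0 + 2` (the bottom machine), `f s i = s i + 1` for `0 < i < n - 1`
(the normal machines), and `f s ⟨n-1⟩ = s ⟨n-1⟩ + 2` (the top machine) ensures
self-stabilization: in every improvement path generated by `f` (starting from a
valid joint strategy), every player is selected infinitely often and, from a
certain point on, every joint strategy in it is legitimate. -/
theorem four_state_scheduler_self_stabilization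
    (n : ℕ) [NeZero n] (hn : 3 ≤ n)
    (f : (Fin n → ZMod 4) → Fin n → ZMod 4)
    (hsched : ∀ (s : Fin n → ZMod 4) (i : Fin n),
      (∀ j : Fin n, fourValid n j (s j)) →
      ¬ BestResponseOn (fourPayoff n) (fourValid n) s i →
      fourValid n i (f s i) ∧
        fourPayoff n s i < fourPayoff n (Function.update s i (f s i)) i)
    (hf0 : ∀ s : Fin n → ZMod 4, f s 0 = s 0 + 2)
    (hfmid : ∀ (s : Fin n → ZMod 4) (i : Fin n),
      0 < i.val → i.val < n - 1 → f s i = s i + 1)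
    (hftop : ∀ s : Fin n → ZMod 4,
      f s ⟨n - 1, by omega⟩ = s ⟨n - 1, by omega⟩ + 2)
    (σ : ℕ → Fin n → ZMod 4) (sel : ℕ → Fin n)
    (hinit : ∀ j : Fin n, fourValid n j (σ 0 j))
    (hgen : ∀ k : ℕ,
      ¬ BestResponseOn (fourPayoff n) (fourValid n) (σ k) (sel k) ∧
      σ (k + 1) = Function.update (σ k) (sel k) (f (σ k) (sel k))) :
    (∀ (i : Fin n) (k : ℕ), ∃ m, k ≤ m ∧ sel m = i) ∧
    (∃ K : ℕ, ∀ m, K ≤ m → LegitimateOn (fourPayoff n) (fourValid n) (σ m)) := by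
  have hvalid : ∀ k (j : Fin n), fourValid n j (σ k j) := by
    intro k
    induction k with
    | zero => exact hinit
    | succ k ih =>
      intro j
      rw [(hgen k).2]
      rcases eq_or_ne j (sel k) with heq | hne
      · rw [heq, Function.update_self]
        by_cases h0 : sel k = 0
        · rw [h0, hf0]
          have hv0 := ih 0
          rw [fourValid, if_pos rfl] at hv0 ⊢
          rcases hv0 with h | h <;> rw [h]
          · exact Or.inr (by decide)
          · exact Or.inl (by decide)
        · by_cases htp : (sel k).val = n - 1
          · have hfi : f (σ k) (sel k) = σ k (sel k) + 2 := by
              have hieq : sel k = ⟨n-1, by omega⟩ := Fin.ext htp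
              rw [hieq]
              exact hftop (σ k)
            rw [hfi]
            have hvi := ih (sel k)
            rw [fourValid, if_neg h0, if_pos htp] at hvi ⊢
            rcases hvi with h | h <;> rw [h]
            · exact Or.inr (by decide)
            · exact Or.inl (by decide)
          · have h0v : 0 < (sel k).val := Nat.pos_of_ne_zero (fun h => h0 (finEq0.2 h))
            have htv : (sel k).val < n - 1 := lt_of_le_of_ne (by omega) htp
            rw [hfmid (σ k) (sel k) h0v htv, fourValid, if_neg h0, if_neg htp]
            trivial
      · rw [Function.update_of_ne hne]
        exact ih j
  have hstepAll : ∀ k, fsStepAt (n-2) (fourE n (σ k)) (fourE n (σ (k+1))) ((sel k).val) := by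
    intro k
    rw [(hgen k).2]
    exact four_step_translate n hn f hf0 hfmid hftop (σ k) (sel k) (hvalid k) (hgen k).1
  obtain ⟨hpart1, K, hK⟩ :=
    fs_abstract (n-2) (fun k => fourE n (σ k)) (fun k => (sel k).val) hstepAll
  constructor
  · intro i k
    obtain ⟨k', h1, h2⟩ := hpart1 i.val (by have := i.isLt; omega) k
    exact ⟨k', h1, Fin.ext h2⟩
  · exact ⟨K, fun m hm => four_legit hn (σ m) (hvalid m) (hK m hm)⟩
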